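/- For n ≡ 0 (mod 6) and k ≡ ±1 (mod 6) with 1 ≤ k < n/2, the function f on the generalized Petersen graph GP(n,k) defined by f(u_i) = f(v_{i+3}) = ∅ if i is even, {1} if i ≡ 1 (mod 6), {2} if i ≡ 3 (mod 6), {3} if i ≡ 5 (mod 6), is a 3-rainbow dominating function of weight n (= |V|/2). -/

import Mathlib

open SimpleGraph Finset

/-- A `k`-rainbow dominating function on a graph `G`: whenever `f v = ∅`,
every color appears on some neighbor of `v`. -/
def IsKRDF {V : Type*} (G : SimpleGraph V) (k : ℕ) (f : V → Finset (Fin k)) : Prop :=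
  ∀ v, f v = ∅ → ∀ c : Fin k, ∃ u, G.Adj v u ∧ c ∈ f u

/-- The weight of a rainbow dominating function. -/
def rdfWeight {V : Type*} [Fintype V] {k : ℕ} (f : V → Finset (Fin k)) : ℕ :=
  ∑ v, (f v).card

/-- The `k`-rainbow domination number of `G`. -/
noncomputable def rainbowDomNum {V : Type*} [Fintype V] (G : SimpleGraph V) (k : ℕ) : ℕ :=
  sInf {w | ∃ f, IsKRDF G k f ∧ rdfWeight f = w}

/-- The generalized Petersen graph `GP(n,k)`: outer vertices `Sum.inl i`, inner
vertices `Sum.inr i`, with outer edges, spokes and inner edges. -/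
def GP (n k : ℕ) : SimpleGraph (ZMod n ⊕ ZMod n) where
  Adj x y := x ≠ y ∧
    (match x, y with
     | Sum.inl i, Sum.inl j => j = i + 1 ∨ i = j + 1
     | Sum.inl i, Sum.inr j => i = j
     | Sum.inr i, Sum.inl j => i = j
     | Sum.inr i, Sum.inr j => j = i + (k : ZMod n) ∨ i = j + (k : ZMod n))
  symm := by
    constructor
    rintro (i | i) (j | j) ⟨hne, h⟩ <;>
      refine ⟨hne.symm, ?_⟩ <;> simp only at h ⊢ <;> tauto
  loopless := by constructor; rintro (i | i) ⟨hne, -⟩ <;> exact hne rfl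

/-- The coloring pattern along a cycle `ZMod n`: `∅` on even positions, color `1` on
positions `≡ 1 (mod 6)`, color `2` on positions `≡ 3 (mod 6)`, color `3` on positions
`≡ 5 (mod 6)` (colors realized as `0, 1, 2 : Fin 3`). -/
def gpColor (n : ℕ) [NeZero n] (i : ZMod n) : Finset (Fin 3) :=
  if i.val % 2 = 0 then ∅
  else if i.val % 6 = 1 then {0}
  else if i.val % 6 = 3 then {1}
  else {2}

/-- The `3`-rainbow dominating function on `GP(n,k)` with `f(u_i) = f(v_{i+3})` given
by the pattern `gpColor`. -/
def gpFun (n : ℕ) [NeZero n] : (ZMod n ⊕ ZMod n) → Finset (Fin 3)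
  | Sum.inl i => gpColor n i
  | Sum.inr i => gpColor n (i - 3)

/-- The pattern `gpColor` viewed on `ZMod 6`. -/
def gp6 : ZMod 6 → Finset (Fin 3) := fun j =>
  if j = 1 then {0} else if j = 3 then {1} else if j = 5 then {2} else ∅

lemma gpColor_cast {n : ℕ} [NeZero n] (hn : (6:ℕ) ∣ n) (i : ZMod n) :
    gpColor n i = gp6 (ZMod.castHom hn (ZMod 6) i) := by
  have hcast : (ZMod.castHom hn (ZMod 6) i) = ((i.val : ℕ) : ZMod 6) := by
    rw [ZMod.castHom_apply, ZMod.natCast_val]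
  have hc : ((i.val : ℕ) : ZMod 6) = ((i.val % 6 : ℕ) : ZMod 6) := (ZMod.natCast_mod _ _).symm
  have h2 : i.val % 2 = (i.val % 6) % 2 := (Nat.mod_mod_of_dvd _ (by norm_num)).symm
  rw [hcast, hc]
  unfold gpColor
  set m := i.val % 6 with hm
  have h6 : m < 6 := Nat.mod_lt _ (by norm_num)
  rw [h2]
  interval_cases m <;> decide

lemma sum_range_parity (m : ℕ) :
    ∑ j ∈ Finset.range (2 * m), (if j % 2 = 0 then 0 else 1) = m := by
  induction m with
  | zero => simp
  | succ m ih =>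
    have : 2 * (m + 1) = (2 * m + 1) + 1 := by ring
    rw [this, Finset.sum_range_succ, Finset.sum_range_succ, ih]
    have h1 : (2 * m) % 2 = 0 := by omega
    have h2 : (2 * m + 1) % 2 = 1 := by omega
    rw [h1, h2]
    simp

/-- For `n ≡ 0 (mod 6)` and `k ≡ ±1 (mod 6)`, `1 ≤ k < n/2`, the function `gpFun` is a
`3`-rainbow dominating function on `GP(n,k)` of weight `n = |V|/2`. -/
theorem gpFun_isKRDF (n k : ℕ) [NeZero n] (hn : n % 6 = 0)
    (hk : k % 6 = 1 ∨ k % 6 = 5) (hk1 : 1 ≤ k) (hk2 : 2 * k < n) :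
    IsKRDF (GP n k) 3 (gpFun n) ∧ rdfWeight (gpFun n) = n := by
  have hn6 : (6:ℕ) ∣ n := Nat.dvd_of_mod_eq_zero hn
  have hnpos : 0 < n := Nat.pos_of_ne_zero (NeZero.ne n)
  have hn6' : 6 ≤ n := Nat.le_of_dvd hnpos hn6
  haveI : Fact (1 < n) := ⟨by omega⟩
  set φ := ZMod.castHom hn6 (ZMod 6) with hφ
  have hinl : ∀ i : ZMod n, gpFun n (Sum.inl i) = gp6 (φ i) := fun i => gpColor_cast hn6 i
  have hinr : ∀ i : ZMod n, gpFun n (Sum.inr i) = gp6 (φ i - 3) := by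
    intro i
    show gpColor n (i - 3) = _
    rw [gpColor_cast hn6, map_sub, map_ofNat]
  have hone : (1 : ZMod n) ≠ 0 := one_ne_zero
  have hkne : ((k:ℕ) : ZMod n) ≠ 0 := by
    intro hd
    rw [ZMod.natCast_eq_zero_iff] at hd
    have := Nat.le_of_dvd (by omega) hd
    omega
  have adjR : ∀ i : ZMod n, (GP n k).Adj (Sum.inl i) (Sum.inl (i+1)) := by
    intro i
    refine ⟨?_, Or.inl rfl⟩
    simp only [ne_eq, Sum.inl.injEq]
    exact fun h => hone (left_eq_add.mp h)
  have adjL : ∀ i : ZMod n, (GP n k).Adj (Sum.inl i) (Sum.inl (i-1)) := by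
    intro i
    refine ⟨?_, Or.inr (sub_add_cancel i 1).symm⟩
    simp only [ne_eq, Sum.inl.injEq]
    intro h
    exact hone (left_eq_add.mp (eq_sub_iff_add_eq.mp h).symm)
  have adjS : ∀ i : ZMod n, (GP n k).Adj (Sum.inl i) (Sum.inr i) := by
    intro i
    exact ⟨by simp, rfl⟩
  have adjS' : ∀ i : ZMod n, (GP n k).Adj (Sum.inr i) (Sum.inl i) := by
    intro i
    exact ⟨by simp, rfl⟩
  have adjIR : ∀ i : ZMod n, (GP n k).Adj (Sum.inr i) (Sum.inr (i + k)) := by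
    intro i
    refine ⟨?_, Or.inl rfl⟩
    simp only [ne_eq, Sum.inr.injEq]
    exact fun h => hkne (left_eq_add.mp h)
  have adjIL : ∀ i : ZMod n, (GP n k).Adj (Sum.inr i) (Sum.inr (i - k)) := by
    intro i
    refine ⟨?_, Or.inr (sub_add_cancel i _).symm⟩
    simp only [ne_eq, Sum.inr.injEq]
    intro h
    exact hkne (left_eq_add.mp (eq_sub_iff_add_eq.mp h).symm)
  have hk6 : ((k:ℕ) : ZMod 6) = 1 ∨ ((k:ℕ) : ZMod 6) = 5 := by
    rcases hk with h | h
    · left; rw [← ZMod.natCast_mod k 6, h]; rfl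
    · right; rw [← ZMod.natCast_mod k 6, h]; rfl
  constructor
  · rintro (i | i) hv c
    · rw [hinl] at hv
      have ha : φ i = 0 ∨ φ i = 2 ∨ φ i = 4 := by
        revert hv; generalize φ i = a; revert a; decide
      have e1 : gpFun n (Sum.inl (i+1)) = gp6 (φ i + 1) := by rw [hinl, map_add, map_one]
      have e2 : gpFun n (Sum.inl (i-1)) = gp6 (φ i - 1) := by rw [hinl, map_sub, map_one]
      have e3 : gpFun n (Sum.inr i) = gp6 (φ i - 3) := hinr i
      rcases ha with h | h | h <;> rw [h] at e1 e2 e3 <;> fin_cases c <;>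
        first
        | exact ⟨_, adjR i, by rw [e1]; decide⟩
        | exact ⟨_, adjL i, by rw [e2]; decide⟩
        | exact ⟨_, adjS i, by rw [e3]; decide⟩
    · rw [hinr] at hv
      have ha : φ i - 3 = 0 ∨ φ i - 3 = 2 ∨ φ i - 3 = 4 := by
        revert hv; generalize φ i - 3 = a; revert a; decide
      have hb : φ i = 3 ∨ φ i = 5 ∨ φ i = 1 := by
        rcases ha with h | h | h
        · left; rw [sub_eq_iff_eq_add] at h; rw [h]; decide
        · right; left; rw [sub_eq_iff_eq_add] at h; rw [h]; decide
        · right; right; rw [sub_eq_iff_eq_add] at h; rw [h]; decide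
      have e1 : gpFun n (Sum.inl i) = gp6 (φ i) := hinl i
      have e2 : gpFun n (Sum.inr (i + k)) = gp6 (φ i + (k : ZMod 6) - 3) := by
        rw [hinr, map_add, map_natCast]
      have e3 : gpFun n (Sum.inr (i - k)) = gp6 (φ i - (k : ZMod 6) - 3) := by
        rw [hinr, map_sub, map_natCast]
      rcases hb with h | h | h <;> rcases hk6 with h6 | h6 <;>
        rw [h] at e1 e2 e3 <;> rw [h6] at e2 e3 <;> fin_cases c <;>
        first
        | exact ⟨_, adjS' i, by rw [e1]; decide⟩
        | exact ⟨_, adjIR i, by rw [e2]; decide⟩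
        | exact ⟨_, adjIL i, by rw [e3]; decide⟩
  · have hcard : ∀ i : ZMod n, (gpColor n i).card = if i.val % 2 = 0 then 0 else 1 := by
      intro i
      unfold gpColor
      split_ifs <;> simp
    have hshift : ∑ i : ZMod n, (gpColor n (i - 3)).card = ∑ i : ZMod n, (gpColor n i).card :=
      Fintype.sum_equiv (Equiv.subRight (3 : ZMod n)) _ _ (fun i => rfl)
    have hsum : ∑ i : ZMod n, (gpColor n i).card = n / 2 := by
      have htrans : ∑ i : ZMod n, (gpColor n i).card
          = ∑ j ∈ Finset.range n, (if j % 2 = 0 then 0 else 1) := by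
        refine Finset.sum_nbij' (fun i => i.val) (fun j => (j : ZMod n)) ?_ ?_ ?_ ?_ ?_
        · intro a _
          exact Finset.mem_range.mpr (ZMod.val_lt a)
        · intro a _
          exact Finset.mem_univ _
        · intro a _
          exact ZMod.natCast_rightInverse a
        · intro a ha
          exact ZMod.val_cast_of_lt (Finset.mem_range.mp ha)
        · intro a _
          exact hcard a
      rw [htrans]
      have hn2 : n = 2 * (n / 2) := by omega
      rw [hn2, sum_range_parity]
      omega
    show (∑ v : ZMod n ⊕ ZMod n, (gpFun n v).card) = n
    rw [Fintype.sum_sum_type]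
    show (∑ i : ZMod n, (gpColor n i).card) + (∑ i : ZMod n, (gpColor n (i - 3)).card) = n
    rw [hshift, hsum]
    omega
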